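/- Let (X, ρ) be a weighted space. A function f : X → ℝ belongs to 𝓑^ρ(X) if and only if the restriction of f to K_R = {x ∈ X : ρ(x) ≤ R} is continuous for every R > 0 and lim_{R→∞} sup_{x ∈ X∖K_R} ρ(x)^{-1} |f(x)| = 0. -/

import Mathlib

open scoped ENNReal NNReal
open Filter Set MeasureTheory TopologicalSpace

noncomputable section

/-- An admissible weight function on a topological space: strictly positive with compact
and separable sublevel sets. -/
structure AdmissibleWeight {X : Type*} [TopologicalSpace X] (ρ : X → ℝ) : Prop where
  pos : ∀ x, 0 < ρ x
  isCompact_sublevel : ∀ R : ℝ, 0 < R → IsCompact {x | ρ x ≤ R}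
  isSeparable_sublevel : ∀ R : ℝ, 0 < R → TopologicalSpace.IsSeparable {x | ρ x ≤ R}

/-- The Banach space of bounded real-valued functions on `X`, with the sup norm. -/
abbrev BddFun (X : Type*) := lp (fun _ : X => ℝ) ∞

/-- Bounded continuous functions, divided by the weight `ρ`.  Under the isometric
identification `f ↦ f / ρ` of `B^ρ(X)` with bounded functions, this is the image of
`C_b(X)`. -/
def preCalB {X : Type*} [TopologicalSpace X] (ρ : X → ℝ) : Submodule ℝ (BddFun X) where
  carrier := {g | ∃ f : X → ℝ, Continuous f ∧ (∃ C, ∀ x, |f x| ≤ C) ∧ ∀ x, g x = f x / ρ x}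
  add_mem' := by
    rintro g₁ g₂ ⟨f₁, hc₁, ⟨C₁, hb₁⟩, h₁⟩ ⟨f₂, hc₂, ⟨C₂, hb₂⟩, h₂⟩
    refine ⟨f₁ + f₂, hc₁.add hc₂, ⟨C₁ + C₂, fun x => ?_⟩, fun x => ?_⟩
    · calc |(f₁ + f₂) x| ≤ |f₁ x| + |f₂ x| := abs_add_le _ _
        _ ≤ C₁ + C₂ := add_le_add (hb₁ x) (hb₂ x)
    · have : (g₁ + g₂ : BddFun X) x = g₁ x + g₂ x := by
        rw [lp.coeFn_add]; rfl
      rw [this, h₁ x, h₂ x]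
      simp [Pi.add_apply, add_div]
  zero_mem' := ⟨0, continuous_const, ⟨0, by simp⟩, fun x => by simp⟩
  smul_mem' := by
    rintro c g ⟨f, hc, ⟨C, hb⟩, h⟩
    refine ⟨fun x => c * f x, continuous_const.mul hc, ⟨|c| * C, fun x => ?_⟩, fun x => ?_⟩
    · rw [abs_mul]
      exact mul_le_mul_of_nonneg_left (hb x) (abs_nonneg c)
    · have : (c • g : BddFun X) x = c * g x := by
        rw [lp.coeFn_smul]; rfl
      rw [this, h x, mul_div_assoc]

/-- `𝓑^ρ(X)`: the closure of (the image of) the bounded continuous functions in `B^ρ(X)`,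
realized under the isometric identification `f ↦ f / ρ` as a closed subspace of the bounded
functions on `X`. -/
def calB {X : Type*} [TopologicalSpace X] (ρ : X → ℝ) : Submodule ℝ (BddFun X) :=
  (preCalB ρ).topologicalClosure

variable {X : Type*} [TopologicalSpace X] {ρ : X → ℝ}

/-- The value at `x` of (the `f/ρ` representation of) an element of `𝓑^ρ(X)`;
this equals `ρ(x)⁻¹ f(x)`. -/
def scaledApp (f : calB ρ) (x : X) : ℝ := (f : BddFun X) x

/-- The true value `f(x)` of an element of `𝓑^ρ(X)`. -/
def valOf (f : calB ρ) (x : X) : ℝ := ρ x * scaledApp f x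

/-- A function `F : X → ℝ` belongs to `𝓑^ρ(X)`. -/
def MemCalB {X : Type*} [TopologicalSpace X] (ρ : X → ℝ) (F : X → ℝ) : Prop :=
  ∃ g : BddFun X, g ∈ calB ρ ∧ ∀ x, g x = F x / ρ x

/-- A generalized Feller semigroup on `𝓑^ρ(X)`. -/
structure IsGenFellerSemigroup {X : Type*} [TopologicalSpace X] (ρ : X → ℝ)
    (P : ℝ≥0 → ((calB ρ) →L[ℝ] (calB ρ))) : Prop where
  map_zero : P 0 = ContinuousLinearMap.id ℝ (calB ρ)
  semigroup : ∀ s t : ℝ≥0, P (s + t) = (P s).comp (P t)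
  tendsto_apply : ∀ (f : calB ρ) (x : X),
    Tendsto (fun t : ℝ≥0 => valOf (P t f) x) (nhds 0) (nhds (valOf f x))
  norm_bound : ∃ (C : ℝ) (ε : ℝ≥0), 0 < ε ∧ ∀ t ≤ ε, ‖P t‖ ≤ C
  pos : ∀ (t : ℝ≥0) (f : calB ρ), (∀ x, 0 ≤ valOf f x) → ∀ x, 0 ≤ valOf (P t f) x


universe u

section AuxLemmas

variable {X : Type u} [TopologicalSpace X]

/-- An admissible weight is bounded below by a positive constant. -/
lemma AdmissibleWeight.exists_pos_le' [T2Space X] {ρ : X → ℝ} (hρ : AdmissibleWeight ρ) :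
    ∃ δ : ℝ, 0 < δ ∧ δ ≤ 1 ∧ ∀ x, δ ≤ ρ x := by
  by_cases h : ∃ n : ℕ, ∀ x, ¬ ρ x ≤ 1 / (n + 1)
  · obtain ⟨n, hn⟩ := h
    refine ⟨1 / (n + 1), by positivity, ?_, fun x => (lt_of_not_ge (hn x)).le⟩
    rw [div_le_one (by positivity)]
    linarith [Nat.cast_nonneg (α := ℝ) n]
  · exfalso
    push_neg at h
    set K : ℕ → Set X := fun n => {x | ρ x ≤ 1 / (n + 1)} with hK
    have hKne : ∀ n, (K n).Nonempty := h
    have hKc : ∀ n, IsCompact (K n) := fun n => hρ.isCompact_sublevel _ (by positivity)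
    have hKcl : ∀ n, IsClosed (K n) := fun n => (hKc n).isClosed
    have hKmono : ∀ n, K (n + 1) ⊆ K n := by
      intro n x hx
      have hx' : ρ x ≤ 1 / ((n : ℝ) + 1 + 1) := by
        have h1 : ρ x ≤ 1 / ((↑(n + 1) : ℝ) + 1) := hx
        push_cast at h1
        linarith
      show ρ x ≤ 1 / ((n : ℝ) + 1)
      have h2 : 1 / ((n : ℝ) + 1 + 1) ≤ 1 / ((n : ℝ) + 1) :=
        one_div_le_one_div_of_le (by positivity) (by linarith)
      linarith
    obtain ⟨x, hx⟩ := IsCompact.nonempty_iInter_of_sequence_nonempty_isCompact_isClosed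
      K hKmono hKne (hKc 0) hKcl
    have hxall : ∀ n : ℕ, ρ x ≤ 1 / (n + 1) := by
      intro n; exact Set.mem_iInter.mp hx n
    have hle : ρ x ≤ 0 :=
      ge_of_tendsto' tendsto_one_div_add_atTop_nhds_zero_nat hxall
    exact absurd (hρ.pos x) (not_lt.mpr hle)

/-- Approximate extension of a continuous function on a compact subset of a completely
regular Hausdorff space by a globally continuous function. -/
lemma exists_continuous_approx [T2Space X] [CompletelyRegularSpace X] {K : Set X}
    (hK : IsCompact K) {f : X → ℝ} (hf : ContinuousOn f K) {ε : ℝ} (hε : 0 < ε) :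
    ∃ g : X → ℝ, Continuous g ∧ ∀ x ∈ K, |g x - f x| < ε := by
  haveI : CompactSpace K := isCompact_iff_compactSpace.mp hK
  haveI : T35Space X := ⟨⟩
  set ι : C(K, X) := ⟨Subtype.val, continuous_subtype_val⟩ with hι
  set A : Subalgebra ℝ C(K, ℝ) := (ContinuousMap.compRightAlgHom ℝ ℝ ι).range with hA
  have hsep : A.SeparatesPoints := by
    rintro x y hxy
    obtain ⟨h, hc, hne⟩ :=
      separatesPoints_continuous_of_t35Space (Subtype.coe_injective.ne hxy)
    refine ⟨fun k : K => h k.1, ⟨(ContinuousMap.mk h hc).comp ι, ⟨⟨h, hc⟩, rfl⟩, rfl⟩, hne⟩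
  obtain ⟨gA, hg⟩ :=
    ContinuousMap.exists_mem_subalgebra_near_continuous_of_separatesPoints A hsep
      (K.restrict f) hf.restrict ε hε
  obtain ⟨G, hG⟩ := gA.2
  refine ⟨G, G.continuous, fun x hx => ?_⟩
  have h1 := hg ⟨x, hx⟩
  have h2 : (gA : C(K, ℝ)) ⟨x, hx⟩ = G x := by rw [← hG]; rfl
  rw [show ((gA : C(K, ℝ)) : K → ℝ) = fun k => (gA : C(K, ℝ)) k from rfl] at h1
  simp only [h2] at h1
  exact (by simpa [Real.norm_eq_abs] using h1 : |G x - K.restrict f ⟨x, hx⟩| < ε)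

/-- Pointwise bound by the sup norm in `lp _ ∞`. -/
lemma bddfun_apply_sub_le {X : Type u} (G H : BddFun X) (x : X) : |G x - H x| ≤ ‖G - H‖ := by
  have h := lp.norm_apply_le_norm ENNReal.top_ne_zero (G - H) x
  have h2 : (G - H) x = G x - H x := by rw [lp.coeFn_sub]; rfl
  rwa [h2, Real.norm_eq_abs] at h

end AuxLemmas


set_option maxHeartbeats 2000000 in
set_option synthInstance.maxHeartbeats 400000 in
/-- Characterization of membership in `𝓑^ρ(X)`: continuity on the compact sublevel sets `K_R`
together with decay of `ρ⁻¹|f|` outside of `K_R` as `R → ∞`. -/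
theorem mem_calB_iff
    {X : Type u} [TopologicalSpace X] [T2Space X] [CompletelyRegularSpace X]
    {ρ : X → ℝ} (hρ : AdmissibleWeight ρ) (f : X → ℝ) :
    MemCalB ρ f ↔
      ((∀ R : ℝ, 0 < R → ContinuousOn f {x | ρ x ≤ R}) ∧
        Tendsto (fun R : ℝ => ⨆ x : {x : X // R < ρ x}, ENNReal.ofReal (|f x.1| / ρ x.1))
          atTop (nhds 0)) := by
  obtain ⟨δ, hδ0, hδ1, hδ⟩ := hρ.exists_pos_le'
  constructor
  · -- forward direction
    rintro ⟨g, hg, hgf⟩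
    have hfx : ∀ x, f x = ρ x * g x := by
      intro x
      rw [hgf x, mul_div_cancel₀ _ (hρ.pos x).ne']
    have habs : ∀ x, |f x| / ρ x = |g x| := by
      intro x
      rw [hgf x, abs_div, abs_of_pos (hρ.pos x)]
    have hgcl : g ∈ closure (preCalB ρ : Set (BddFun X)) := by
      rw [← Submodule.topologicalClosure_coe]
      exact hg
    constructor
    · -- continuity on sublevel sets
      intro R hR
      obtain ⟨u, hus, hul⟩ := mem_closure_iff_seq_limit.mp hgcl
      have hus' : ∀ n, ∃ h : X → ℝ, Continuous h ∧ (∃ C, ∀ x, |h x| ≤ C) ∧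
          ∀ x, u n x = h x / ρ x := fun n => hus n
      choose F hFc hFb hFe using hus'
      have hFx : ∀ n x, F n x = ρ x * u n x := by
        intro n x
        rw [hFe n x, mul_div_cancel₀ _ (hρ.pos x).ne']
      have hTU : TendstoUniformlyOn (fun n x => F n x) f atTop {x | ρ x ≤ R} := by
        rw [Metric.tendstoUniformlyOn_iff]
        intro ε hε
        obtain ⟨N, hN⟩ := Metric.tendsto_atTop.mp hul (ε / R) (by positivity)
        filter_upwards [eventually_ge_atTop N] with n hn x hx
        have hxR : ρ x ≤ R := hx
        have hd : |g x - u n x| ≤ dist (u n) g := by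
          rw [dist_eq_norm]
          have := bddfun_apply_sub_le (u n) g x
          rwa [abs_sub_comm] at this
        have hdn : dist (u n) g < ε / R := hN n hn
        have : dist (f x) (F n x) = ρ x * |g x - u n x| := by
          rw [Real.dist_eq, hfx x, hFx n x, ← mul_sub, abs_mul, abs_of_pos (hρ.pos x)]
        rw [this]
        calc ρ x * |g x - u n x| ≤ R * dist (u n) g :=
              mul_le_mul hxR hd (abs_nonneg _) hR.le
          _ < R * (ε / R) := by
              exact mul_lt_mul_of_pos_left hdn hR
          _ = ε := by field_simp
      exact hTU.continuousOn (Filter.Eventually.of_forall fun n => (hFc n).continuousOn).frequently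
    · -- decay at infinity
      rw [ENNReal.tendsto_nhds_zero]
      intro ε hε
      rcases eq_or_ne ε ⊤ with rfl | hεt
      · exact Filter.Eventually.of_forall fun R => le_top
      have het : (0:ℝ) < ε.toReal := ENNReal.toReal_pos hε.ne' hεt
      set e : ℝ := ε.toReal with he
      obtain ⟨h, hh, hdist⟩ := Metric.mem_closure_iff.mp hgcl (e / 2) (by positivity)
      obtain ⟨f₀, hf₀c, ⟨C, hC⟩, hf₀h⟩ := hh
      set C' : ℝ := max C 0 with hC'
      have hC'0 : 0 ≤ C' := le_max_right _ _
      filter_upwards [eventually_ge_atTop (max 1 (2 * C' / e))] with R hR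
      have hR1 : (1:ℝ) ≤ R := le_trans (le_max_left _ _) hR
      have hRC : 2 * C' / e ≤ R := le_trans (le_max_right _ _) hR
      refine iSup_le fun x => ?_
      have hρx : R < ρ x.1 := x.2
      have hρxpos : (0:ℝ) < ρ x.1 := hρ.pos x.1
      have h1 : |g x.1 - h x.1| ≤ e / 2 := by
        have := bddfun_apply_sub_le g h x.1
        rw [← dist_eq_norm] at this
        exact this.trans hdist.le
      have h2 : |h x.1| ≤ C' / ρ x.1 := by
        rw [hf₀h x.1, abs_div, abs_of_pos hρxpos]
        exact div_le_div₀ hC'0 ((hC x.1).trans (le_max_left _ _)) hρxpos le_rfl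
      have h3 : C' / ρ x.1 ≤ e / 2 := by
        have h4 : C' / ρ x.1 ≤ C' / R :=
          div_le_div_of_nonneg_left hC'0 (by linarith) hρx.le
        have h5 : C' / R ≤ e / 2 := by
          rw [div_le_iff₀ (by linarith)]
          rw [div_le_iff₀ het] at hRC
          nlinarith
        linarith
      have hgx : |g x.1| ≤ e := by
        calc |g x.1| ≤ |g x.1 - h x.1| + |h x.1| := by
              have := abs_sub_abs_le_abs_sub (g x.1) (h x.1)
              have := abs_add_le (g x.1 - h x.1) (h x.1)
              calc |g x.1| = |(g x.1 - h x.1) + h x.1| := by ring_nf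
                _ ≤ |g x.1 - h x.1| + |h x.1| := abs_add_le _ _
          _ ≤ e / 2 + e / 2 := add_le_add h1 (h2.trans h3)
          _ = e := by ring
      calc ENNReal.ofReal (|f x.1| / ρ x.1) = ENNReal.ofReal |g x.1| := by rw [habs]
        _ ≤ ENNReal.ofReal e := ENNReal.ofReal_le_ofReal hgx
        _ = ε := ENNReal.ofReal_toReal hεt
  · -- backward direction
    rintro ⟨hcont, hdecay⟩
    have key : ∀ c : ℝ, 0 < c → ∃ R₀ : ℝ, 1 ≤ R₀ ∧ ∀ x, R₀ < ρ x → |f x| / ρ x ≤ c := by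
      intro c hc
      have h := (ENNReal.tendsto_nhds_zero.mp hdecay) (ENNReal.ofReal c)
        (ENNReal.ofReal_pos.mpr hc)
      obtain ⟨R₀, hR₀1, hR₀2⟩ := (h.and (eventually_ge_atTop (1:ℝ))).exists
      refine ⟨R₀, hR₀2, fun x hx => ?_⟩
      have h1 : ENNReal.ofReal (|f x| / ρ x) ≤ ENNReal.ofReal c :=
        le_trans (le_iSup (fun y : {y : X // R₀ < ρ y} =>
          ENNReal.ofReal (|f y.1| / ρ y.1)) ⟨x, hx⟩) hR₀1
      exact (ENNReal.ofReal_le_ofReal_iff hc.le).mp h1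
    have habs : ∀ x, |f x / ρ x| = |f x| / ρ x := by
      intro x
      rw [abs_div, abs_of_pos (hρ.pos x)]
    obtain ⟨R₀, hR₀1, hR₀⟩ := key 1 one_pos
    have hR₀pos : (0:ℝ) < R₀ := lt_of_lt_of_le one_pos hR₀1
    obtain ⟨M, hM⟩ := (hρ.isCompact_sublevel R₀ hR₀pos).exists_bound_of_continuousOn
      (hcont R₀ hR₀pos)
    set M' : ℝ := max M 0 with hM'
    set B : ℝ := max (M' / δ) 1 with hB
    have hB1 : (1:ℝ) ≤ B := le_max_right _ _
    have hgb : ∀ x, |f x / ρ x| ≤ B := by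
      intro x
      rw [habs x]
      by_cases hx : ρ x ≤ R₀
      · have h1 : |f x| ≤ M' := le_trans (by simpa [Real.norm_eq_abs] using hM x hx)
          (le_max_left _ _)
        calc |f x| / ρ x ≤ M' / δ :=
              div_le_div₀ (le_max_right M 0) h1 hδ0 (hδ x)
          _ ≤ B := le_max_left _ _
      · exact (hR₀ x (lt_of_not_ge hx)).trans hB1
    set gfun : X → ℝ := fun x => f x / ρ x with hgfun
    have hgmem : Memℓp gfun ∞ := by
      apply memℓp_infty
      refine ⟨B, ?_⟩
      rintro r ⟨x, rfl⟩
      simpa [Real.norm_eq_abs] using hgb x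
    set glp : BddFun X := ⟨gfun, hgmem⟩ with hglp
    have hglpx : ∀ x, glp x = gfun x := fun x => rfl
    refine ⟨glp, ?_, fun x => rfl⟩
    rw [calB, ← SetLike.mem_coe, Submodule.topologicalClosure_coe]
    rw [Metric.mem_closure_iff]
    intro ε hε
    obtain ⟨R₁, hR₁1, hR₁⟩ := key (ε / 4) (by positivity)
    set M₁ : ℝ := R₁ * B with hM₁
    have hM₁pos : 0 < M₁ := mul_pos (by linarith) (by linarith)
    have hfM₁ : ∀ x, ρ x ≤ R₁ → |f x| ≤ M₁ := by
      intro x hx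
      have h1 : |f x| = ρ x * (|f x| / ρ x) := by
        rw [mul_div_cancel₀ _ (hρ.pos x).ne']
      rw [h1, ← habs x]
      exact mul_le_mul hx (hgb x) (abs_nonneg _) (by linarith)
    set R₂ : ℝ := max R₁ (4 * M₁ / ε) with hR₂
    have hR₂R₁ : R₁ ≤ R₂ := le_max_left _ _
    have hR₂1 : (1:ℝ) ≤ R₂ := le_trans hR₁1 hR₂R₁
    have hR₂pos : (0:ℝ) < R₂ := by linarith
    have hR₂M₁ : 4 * M₁ / ε ≤ R₂ := le_max_right _ _
    set C : ℝ := max M₁ (R₂ * (ε / 4)) with hCdef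
    have hCpos : 0 < C := lt_of_lt_of_le hM₁pos (le_max_left _ _)
    have hfC : ∀ x, ρ x ≤ R₂ → |f x| ≤ C := by
      intro x hx
      by_cases hx1 : ρ x ≤ R₁
      · exact (hfM₁ x hx1).trans (le_max_left _ _)
      · have h1 : |f x| = ρ x * (|f x| / ρ x) := by
          rw [mul_div_cancel₀ _ (hρ.pos x).ne']
        have h2 : |f x| ≤ R₂ * (ε / 4) := by
          rw [h1]
          exact mul_le_mul hx (hR₁ x (lt_of_not_ge hx1))
            (div_nonneg (abs_nonneg _) (hρ.pos x).le) (by linarith)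
        exact h2.trans (le_max_right _ _)
    obtain ⟨G, hGc, hG⟩ := exists_continuous_approx (hρ.isCompact_sublevel R₂ hR₂pos)
      (hcont R₂ hR₂pos) (show (0:ℝ) < δ * ε / 4 by positivity)
    set C' : ℝ := C + δ * ε / 4 with hC'def
    have hC'pos : 0 < C' := by positivity
    set f₀ : X → ℝ := fun x => max (-C') (min C' (G x)) with hf₀
    have hf₀c : Continuous f₀ := continuous_const.max (continuous_const.min hGc)
    have hf₀b : ∀ x, |f₀ x| ≤ C' := by
      intro x
      rw [abs_le]
      exact ⟨le_max_left _ _, max_le (by linarith) (min_le_left _ _)⟩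
    have hf₀K : ∀ x, ρ x ≤ R₂ → |f₀ x - f x| < δ * ε / 4 := by
      intro x hx
      have h1 : |G x - f x| < δ * ε / 4 := hG x hx
      have h2 : |G x| ≤ C' := by
        have := hfC x hx
        have h3 : |G x| ≤ |G x - f x| + |f x| := by
          calc |G x| = |(G x - f x) + f x| := by ring_nf
            _ ≤ |G x - f x| + |f x| := abs_add_le _ _
        rw [hC'def]
        linarith
      have h4 : f₀ x = G x := by
        rw [hf₀]
        rw [abs_le] at h2
        simp only [min_eq_right h2.2, max_eq_right h2.1]
      rwa [h4]
    set hfun : X → ℝ := fun x => f₀ x / ρ x with hhfun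
    have hhmem : Memℓp hfun ∞ := by
      apply memℓp_infty
      refine ⟨C' / δ, ?_⟩
      rintro r ⟨x, rfl⟩
      simp only [Real.norm_eq_abs, hhfun]
      rw [abs_div, abs_of_pos (hρ.pos x)]
      exact div_le_div₀ hC'pos.le (hf₀b x) hδ0 (hδ x)
    set hlp : BddFun X := ⟨hfun, hhmem⟩ with hhlp
    refine ⟨hlp, ⟨f₀, hf₀c, ⟨C', hf₀b⟩, fun x => rfl⟩, ?_⟩
    have hbound : ∀ x, |glp x - hlp x| ≤ 3 * ε / 4 := by
      intro x
      have hρx : 0 < ρ x := hρ.pos x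
      have heq : glp x - hlp x = (f x - f₀ x) / ρ x := by
        rw [hglpx x]
        show gfun x - hfun x = _
        rw [hgfun, hhfun]
        rw [div_sub_div_same]
      rw [heq, abs_div, abs_of_pos hρx]
      by_cases hx : ρ x ≤ R₂
      · have h1 : |f x - f₀ x| ≤ δ * ε / 4 := by
          rw [abs_sub_comm]; exact (hf₀K x hx).le
        calc |f x - f₀ x| / ρ x ≤ (δ * ε / 4) / δ :=
              div_le_div₀ (by positivity) h1 hδ0 (hδ x)
          _ = ε / 4 := by field_simp
          _ ≤ 3 * ε / 4 := by linarith
      · push_neg at hx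
        have hxR₁ : R₁ < ρ x := lt_of_le_of_lt hR₂R₁ hx
        have h1 : |f x - f₀ x| / ρ x ≤ |f x| / ρ x + |f₀ x| / ρ x := by
          rw [← add_div]
          gcongr
          exact abs_sub _ _
        have h2 : |f x| / ρ x ≤ ε / 4 := hR₁ x hxR₁
        have h3 : |f₀ x| / ρ x ≤ C' / R₂ := by
          calc |f₀ x| / ρ x ≤ C' / ρ x := by gcongr; exact hf₀b x
            _ ≤ C' / R₂ := by gcongr
        have h4 : C' / R₂ ≤ ε / 2 := by
          have h5 : C ≤ R₂ * (ε / 4) := by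
            refine max_le ?_ le_rfl
            rw [div_le_iff₀ hε] at hR₂M₁
            nlinarith
          have h6 : C / R₂ ≤ ε / 4 := by
            rw [div_le_iff₀ hR₂pos]
            linarith [h5]
          have h7 : (δ * ε / 4) / R₂ ≤ ε / 4 := by
            calc (δ * ε / 4) / R₂ ≤ (δ * ε / 4) / 1 := by gcongr
              _ = δ * ε / 4 := by ring
              _ ≤ 1 * ε / 4 := by nlinarith
              _ = ε / 4 := by ring
          calc C' / R₂ = C / R₂ + (δ * ε / 4) / R₂ := by rw [hC'def, add_div]
            _ ≤ ε / 4 + ε / 4 := add_le_add h6 h7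
            _ = ε / 2 := by ring
        linarith
    have hnorm : ‖glp - hlp‖ ≤ 3 * ε / 4 := by
      apply lp.norm_le_of_forall_le (by positivity)
      intro x
      have hx : (glp - hlp) x = glp x - hlp x := by rw [lp.coeFn_sub]; rfl
      rw [hx, Real.norm_eq_abs]
      exact hbound x
    rw [dist_comm, dist_eq_norm]
    calc ‖hlp - glp‖ = ‖glp - hlp‖ := by rw [norm_sub_rev]
      _ ≤ 3 * ε / 4 := hnorm
      _ < ε := by linarith

end
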